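/- arXiv:1704.03519 — 8 statements merged into one kernel-verified Lean document; each statement's English description precedes it below -/
import Mathlib

section
/- Let C ⊆ Rⁿ be a linear code over R and write C = η₁C₁ ⊕ η₂C₂ ⊕ η₃C₃ with C₁, C₂, C₃ linear codes over F_q. Then C ∩ C^⊥ = {0} if and only if Cᵢ ∩ Cᵢ^⊥ = {0} for each i = 1, 2, 3. -/
open Polynomial

/-- The ring `R = F_q[v]/(v^3 - v)`. -/
noncomputable abbrev Rq (F : Type*) [Field F] : Type _ := AdjoinRoot (X ^ 3 - X : F[X])

/-- The image `v` of the indeterminate in `R = F_q[v]/(v^3 - v)`. -/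
noncomputable abbrev vq (F : Type*) [Field F] : Rq F := AdjoinRoot.root _

/-- The Euclidean dual of a code: `C^⊥ = {x | ∀ y ∈ C, Σ xᵢyᵢ = 0}`. -/
def dualCode {S : Type*} [CommRing S] {ι : Type*} [Fintype ι]
    (C : Submodule S (ι → S)) : Submodule S (ι → S) where
  carrier := {x | ∀ y ∈ C, ∑ i, x i * y i = 0}
  add_mem' := by
    intro a b ha hb y hy
    simp only [Set.mem_setOf_eq] at *
    simp [Pi.add_apply, add_mul, Finset.sum_add_distrib, ha y hy, hb y hy]
  zero_mem' := by intro y hy; simp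
  smul_mem' := by
    intro c a ha y hy
    simp only [Set.mem_setOf_eq] at *
    simp [Pi.smul_apply, smul_eq_mul, mul_assoc, ← Finset.mul_sum, ha y hy]

lemma v_cube (F : Type*) [Field F] : vq F ^ 3 = vq F := by
  have h := AdjoinRoot.eval₂_root (X ^ 3 - X : F[X])
  simpa [sub_eq_zero] using h

noncomputable def eta1 (F : Type*) [Field F] : Rq F := 1 - vq F ^ 2
noncomputable def eta2 (F : Type*) [Field F] : Rq F :=
  algebraMap F (Rq F) 2⁻¹ * (vq F + vq F ^ 2)
noncomputable def eta3 (F : Type*) [Field F] : Rq F :=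
  algebraMap F (Rq F) 2⁻¹ * (vq F ^ 2 - vq F)

section
variable (F : Type*) [Field F]

lemma half_two (h2 : (2:F) ≠ 0) : algebraMap F (Rq F) 2⁻¹ * 2 = 1 := by
  rw [show ((2 : Rq F)) = algebraMap F (Rq F) 2 from (map_ofNat _ 2).symm,
    ← map_mul, inv_mul_cancel₀ h2, map_one]

lemma e11 : eta1 F * eta1 F = eta1 F := by
  unfold eta1; linear_combination (vq F) * v_cube F

lemma e22 (h2 : (2:F) ≠ 0) : eta2 F * eta2 F = eta2 F := by
  unfold eta2
  linear_combination ((algebraMap F (Rq F) 2⁻¹)^2 * (2 + vq F)) * v_cube F +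
    (algebraMap F (Rq F) 2⁻¹ * (vq F + vq F ^ 2)) * half_two F h2

lemma e33 (h2 : (2:F) ≠ 0) : eta3 F * eta3 F = eta3 F := by
  unfold eta3
  linear_combination ((algebraMap F (Rq F) 2⁻¹)^2 * (vq F - 2)) * v_cube F +
    (algebraMap F (Rq F) 2⁻¹ * (vq F ^ 2 - vq F)) * half_two F h2

lemma e12 : eta1 F * eta2 F = 0 := by
  unfold eta1 eta2
  linear_combination (-(algebraMap F (Rq F) 2⁻¹) * (1 + vq F)) * v_cube F

lemma e13 : eta1 F * eta3 F = 0 := by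
  unfold eta1 eta3
  linear_combination (algebraMap F (Rq F) 2⁻¹ * (1 - vq F)) * v_cube F

lemma e23 : eta2 F * eta3 F = 0 := by
  unfold eta2 eta3
  linear_combination ((algebraMap F (Rq F) 2⁻¹)^2 * vq F) * v_cube F

lemma triple_prod (h2 : (2:F) ≠ 0) (A B Cc A' B' C' : Rq F) :
    (eta1 F * A + eta2 F * B + eta3 F * Cc) * (eta1 F * A' + eta2 F * B' + eta3 F * C') =
      eta1 F * (A * A') + eta2 F * (B * B') + eta3 F * (Cc * C') := by
  linear_combination (A * A') * e11 F + (B * B') * e22 F h2 + (Cc * C') * e33 F h2 +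
    (A * B' + B * A') * e12 F + (A * C' + Cc * A') * e13 F + (B * C' + Cc * B') * e23 F

lemma sum_triple (h2 : (2:F) ≠ 0) {n : ℕ} (a b c a' b' c' : Fin n → F) :
    ∑ i, (eta1 F * algebraMap F (Rq F) (a i) + eta2 F * algebraMap F (Rq F) (b i) +
        eta3 F * algebraMap F (Rq F) (c i)) *
      (eta1 F * algebraMap F (Rq F) (a' i) + eta2 F * algebraMap F (Rq F) (b' i) +
        eta3 F * algebraMap F (Rq F) (c' i)) =
    eta1 F * algebraMap F (Rq F) (∑ i, a i * a' i) +
      eta2 F * algebraMap F (Rq F) (∑ i, b i * b' i) +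
      eta3 F * algebraMap F (Rq F) (∑ i, c i * c' i) := by
  rw [map_sum, map_sum, map_sum, Finset.mul_sum, Finset.mul_sum, Finset.mul_sum,
    ← Finset.sum_add_distrib, ← Finset.sum_add_distrib]
  refine Finset.sum_congr rfl fun i _ => ?_
  rw [triple_prod F h2, map_mul, map_mul, map_mul]

end

noncomputable def evR (F : Type*) [Field F] (r : F) (hr : r ^ 3 = r) : Rq F →+* F :=
  AdjoinRoot.lift (RingHom.id F) r (by simp [hr])

lemma evR_alg (F : Type*) [Field F] (r : F) (hr : r ^ 3 = r) (t : F) :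
    evR F r hr (algebraMap F (Rq F) t) = t := by
  rw [AdjoinRoot.algebraMap_eq]; exact AdjoinRoot.lift_of _

lemma evR_of (F : Type*) [Field F] (r : F) (hr : r ^ 3 = r) (t : F) :
    evR F r hr (AdjoinRoot.of _ t) = t := AdjoinRoot.lift_of _

lemma evR_v (F : Type*) [Field F] (r : F) (hr : r ^ 3 = r) :
    evR F r hr (vq F) = r := AdjoinRoot.lift_root _

section
variable (F : Type*) [Field F]

lemma eta1_inj (t : F) (h : eta1 F * algebraMap F (Rq F) t = 0) : t = 0 := by
  have := congrArg (evR F 0 (by norm_num)) h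
  simpa [eta1, map_mul, evR_alg, evR_of, evR_v] using this

lemma eta2_inj (h2 : (2:F) ≠ 0) (t : F) (h : eta2 F * algebraMap F (Rq F) t = 0) : t = 0 := by
  have := congrArg (evR F 1 (by norm_num)) h
  simp [eta2, map_mul, evR_alg, evR_of, evR_v] at this
  rcases this with h' | h'
  · rcases h' with h'' | h''
    · exact absurd h'' h2
    · rw [one_add_one_eq_two] at h''; exact absurd h'' h2
  · exact h'

lemma eta3_inj (h2 : (2:F) ≠ 0) (t : F) (h : eta3 F * algebraMap F (Rq F) t = 0) : t = 0 := by
  have := congrArg (evR F (-1) (by norm_num)) h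
  simp [eta3, map_mul, evR_alg, evR_of, evR_v] at this
  rcases this with h' | h'
  · rcases h' with h'' | h''
    · exact absurd h'' h2
    · rw [one_add_one_eq_two] at h''; exact absurd h'' h2
  · exact h'

end
lemma two_ne (F : Type*) [Field F] [Fintype F] (hodd : Odd (Fintype.card F)) : (2:F) ≠ 0 := by
  refine Ring.two_ne_zero fun h => ?_
  have := FiniteField.even_card_of_char_two h
  rw [Nat.odd_iff] at hodd
  omega

lemma eta1_def (F : Type*) [Field F] : eta1 F = 1 - vq F ^ 2 := rfl
lemma eta2_def (F : Type*) [Field F] :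
    eta2 F = algebraMap F (Rq F) 2⁻¹ * (vq F + vq F ^ 2) := rfl
lemma eta3_def (F : Type*) [Field F] :
    eta3 F = algebraMap F (Rq F) 2⁻¹ * (vq F ^ 2 - vq F) := rfl

lemma mem_dualCode {S : Type*} [CommRing S] {ι : Type*} [Fintype ι] {C : Submodule S (ι → S)}
    {x : ι → S} : x ∈ dualCode C ↔ ∀ y ∈ C, ∑ i, x i * y i = 0 := Iff.rfl


/-- Let `C = η₁C₁ ⊕ η₂C₂ ⊕ η₃C₃` be a linear code of length `n` over
`R = F_q[v]/(v^3 - v)`, with `C₁, C₂, C₃` linear codes over `F_q`.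
Then `C ∩ C^⊥ = {0}` if and only if `Cᵢ ∩ Cᵢ^⊥ = {0}` for each `i = 1, 2, 3`. -/
theorem stmt_5 (F : Type*) [Field F] [Fintype F] (hodd : Odd (Fintype.card F)) (n : ℕ)
    (C₁ C₂ C₃ : Submodule F (Fin n → F))
    (C : Submodule (Rq F) (Fin n → Rq F))
    (hC : ∀ x : Fin n → Rq F,
      x ∈ C ↔ ∃ a ∈ C₁, ∃ b ∈ C₂, ∃ c ∈ C₃,
        x = fun i =>
          (1 - vq F ^ 2) * algebraMap F (Rq F) (a i) +
            (algebraMap F (Rq F) 2⁻¹ * (vq F + vq F ^ 2)) * algebraMap F (Rq F) (b i) +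
            (algebraMap F (Rq F) 2⁻¹ * (vq F ^ 2 - vq F)) * algebraMap F (Rq F) (c i))
 :
    C ⊓ dualCode C = ⊥ ↔
      (C₁ ⊓ dualCode C₁ = ⊥ ∧ C₂ ⊓ dualCode C₂ = ⊥ ∧ C₃ ⊓ dualCode C₃ = ⊥) := by
  have h2 : (2:F) ≠ 0 := two_ne F hodd
  simp only [← eta1_def F, ← eta2_def F, ← eta3_def F] at hC
  constructor
  · intro hC0
    refine ⟨?_, ?_, ?_⟩
    · rw [eq_bot_iff]
      intro a ha
      rw [Submodule.mem_inf] at ha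
      obtain ⟨ha1, haD⟩ := ha
      have haD' := mem_dualCode.mp haD
      rw [Submodule.mem_bot]
      have hxmem : (fun i => eta1 F * algebraMap F (Rq F) (a i) +
          eta2 F * algebraMap F (Rq F) ((0 : Fin n → F) i) +
          eta3 F * algebraMap F (Rq F) ((0 : Fin n → F) i)) ∈ C ⊓ dualCode C := by
        refine Submodule.mem_inf.mpr ⟨(hC _).2 ⟨a, ha1, 0, zero_mem _, 0, zero_mem _, rfl⟩, ?_⟩
        rw [mem_dualCode]
        intro y hy
        obtain ⟨a', ha', b', hb', c', hc', rfl⟩ := (hC y).1 hy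
        simp only
        rw [sum_triple F h2 a 0 0 a' b' c', haD' a' ha']
        simp
      rw [hC0, Submodule.mem_bot] at hxmem
      funext i
      have := congrFun hxmem i
      simp only [Pi.zero_apply, map_zero, mul_zero, add_zero] at this
      exact eta1_inj F (a i) this
    · rw [eq_bot_iff]
      intro a ha
      rw [Submodule.mem_inf] at ha
      obtain ⟨ha1, haD⟩ := ha
      have haD' := mem_dualCode.mp haD
      rw [Submodule.mem_bot]
      have hxmem : (fun i => eta1 F * algebraMap F (Rq F) ((0 : Fin n → F) i) +
          eta2 F * algebraMap F (Rq F) (a i) +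
          eta3 F * algebraMap F (Rq F) ((0 : Fin n → F) i)) ∈ C ⊓ dualCode C := by
        refine Submodule.mem_inf.mpr ⟨(hC _).2 ⟨0, zero_mem _, a, ha1, 0, zero_mem _, rfl⟩, ?_⟩
        rw [mem_dualCode]
        intro y hy
        obtain ⟨a', ha', b', hb', c', hc', rfl⟩ := (hC y).1 hy
        simp only
        rw [sum_triple F h2 0 a 0 a' b' c', haD' b' hb']
        simp
      rw [hC0, Submodule.mem_bot] at hxmem
      funext i
      have := congrFun hxmem i
      simp only [Pi.zero_apply, map_zero, mul_zero, add_zero, zero_add] at this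
      exact eta2_inj F h2 (a i) this
    · rw [eq_bot_iff]
      intro a ha
      rw [Submodule.mem_inf] at ha
      obtain ⟨ha1, haD⟩ := ha
      have haD' := mem_dualCode.mp haD
      rw [Submodule.mem_bot]
      have hxmem : (fun i => eta1 F * algebraMap F (Rq F) ((0 : Fin n → F) i) +
          eta2 F * algebraMap F (Rq F) ((0 : Fin n → F) i) +
          eta3 F * algebraMap F (Rq F) (a i)) ∈ C ⊓ dualCode C := by
        refine Submodule.mem_inf.mpr ⟨(hC _).2 ⟨0, zero_mem _, 0, zero_mem _, a, ha1, rfl⟩, ?_⟩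
        rw [mem_dualCode]
        intro y hy
        obtain ⟨a', ha', b', hb', c', hc', rfl⟩ := (hC y).1 hy
        simp only
        rw [sum_triple F h2 0 0 a a' b' c', haD' c' hc']
        simp
      rw [hC0, Submodule.mem_bot] at hxmem
      funext i
      have := congrFun hxmem i
      simp only [Pi.zero_apply, map_zero, mul_zero, add_zero, zero_add] at this
      exact eta3_inj F h2 (a i) this
  · rintro ⟨hD1, hD2, hD3⟩
    rw [eq_bot_iff]
    intro x hx
    rw [Submodule.mem_inf] at hx
    obtain ⟨hxC, hxD⟩ := hx
    obtain ⟨a, ha, b, hb, c, hc, rfl⟩ := (hC x).1 hxC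
    have hxD' := mem_dualCode.mp hxD
    rw [Submodule.mem_bot]
    have haD : a ∈ dualCode C₁ := by
      rw [mem_dualCode]
      intro a' ha'
      have hy : (fun i => eta1 F * algebraMap F (Rq F) (a' i) +
          eta2 F * algebraMap F (Rq F) ((0 : Fin n → F) i) +
          eta3 F * algebraMap F (Rq F) ((0 : Fin n → F) i)) ∈ C :=
        (hC _).2 ⟨a', ha', 0, zero_mem _, 0, zero_mem _, rfl⟩
      have h := hxD' _ hy
      rw [sum_triple F h2 a b c a' 0 0] at h
      simp only [Pi.zero_apply, mul_zero, Finset.sum_const_zero, map_zero, add_zero] at h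
      exact eta1_inj F _ h
    have hbD : b ∈ dualCode C₂ := by
      rw [mem_dualCode]
      intro b' hb'
      have hy : (fun i => eta1 F * algebraMap F (Rq F) ((0 : Fin n → F) i) +
          eta2 F * algebraMap F (Rq F) (b' i) +
          eta3 F * algebraMap F (Rq F) ((0 : Fin n → F) i)) ∈ C :=
        (hC _).2 ⟨0, zero_mem _, b', hb', 0, zero_mem _, rfl⟩
      have h := hxD' _ hy
      rw [sum_triple F h2 a b c 0 b' 0] at h
      simp only [Pi.zero_apply, mul_zero, Finset.sum_const_zero, map_zero, add_zero,
        zero_add] at h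
      exact eta2_inj F h2 _ h
    have hcD : c ∈ dualCode C₃ := by
      rw [mem_dualCode]
      intro c' hc'
      have hy : (fun i => eta1 F * algebraMap F (Rq F) ((0 : Fin n → F) i) +
          eta2 F * algebraMap F (Rq F) ((0 : Fin n → F) i) +
          eta3 F * algebraMap F (Rq F) (c' i)) ∈ C :=
        (hC _).2 ⟨0, zero_mem _, 0, zero_mem _, c', hc', rfl⟩
      have h := hxD' _ hy
      rw [sum_triple F h2 a b c 0 0 c'] at h
      simp only [Pi.zero_apply, mul_zero, Finset.sum_const_zero, map_zero, add_zero,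
        zero_add] at h
      exact eta3_inj F h2 _ h
    have ha0 : a = 0 := by
      have : a ∈ C₁ ⊓ dualCode C₁ := Submodule.mem_inf.mpr ⟨ha, haD⟩
      rw [hD1, Submodule.mem_bot] at this; exact this
    have hb0 : b = 0 := by
      have : b ∈ C₂ ⊓ dualCode C₂ := Submodule.mem_inf.mpr ⟨hb, hbD⟩
      rw [hD2, Submodule.mem_bot] at this; exact this
    have hc0 : c = 0 := by
      have : c ∈ C₃ ⊓ dualCode C₃ := Submodule.mem_inf.mpr ⟨hc, hcD⟩
      rw [hD3, Submodule.mem_bot] at this; exact this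
    funext i
    simp [ha0, hb0, hc0]
end

section
/- If C is an LCD code over F_q of length n, then the code 𝒞 = η₁C ⊕ η₂C ⊕ η₃C over R is an LCD code of length n over R. -/
open Polynomial

/-- Evaluation homomorphism `Rq F →+* F` at a root `r` of `X^3 - X`. -/
noncomputable def evRq (F : Type*) [Field F] (r : F) (hr : r ^ 3 = r) : Rq F →+* F :=
  AdjoinRoot.lift (RingHom.id F) r (by simp [eval₂_sub, eval₂_pow, hr])

theorem evRq_of (F : Type*) [Field F] (r : F) (hr : r ^ 3 = r) (s : F) :
    evRq F r hr (algebraMap F (Rq F) s) = s := AdjoinRoot.lift_of _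

theorem evRq_of' (F : Type*) [Field F] (r : F) (hr : r ^ 3 = r) (s : F) :
    evRq F r hr (AdjoinRoot.of _ s) = s := AdjoinRoot.lift_of _

theorem evRq_root (F : Type*) [Field F] (r : F) (hr : r ^ 3 = r) :
    evRq F r hr (vq F) = r := AdjoinRoot.lift_root _

/-- If `C` is an LCD code over `F_q` of length `n`, then `𝒞 = η₁C ⊕ η₂C ⊕ η₃C`
is an LCD code of length `n` over `R = F_q[v]/(v^3 - v)`. -/
theorem stmt_6 (F : Type*) [Field F] [Fintype F] (hodd : Odd (Fintype.card F)) (n : ℕ)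
    (C : Submodule F (Fin n → F)) (hLCD : C ⊓ dualCode C = ⊥)
    (𝒞 : Submodule (Rq F) (Fin n → Rq F))
    (h𝒞 : ∀ x : Fin n → Rq F,
      x ∈ 𝒞 ↔ ∃ a ∈ C, ∃ b ∈ C, ∃ c ∈ C,
        x = fun i =>
          (1 - vq F ^ 2) * algebraMap F (Rq F) (a i) +
            (algebraMap F (Rq F) 2⁻¹ * (vq F + vq F ^ 2)) * algebraMap F (Rq F) (b i) +
            (algebraMap F (Rq F) 2⁻¹ * (vq F ^ 2 - vq F)) * algebraMap F (Rq F) (c i))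
 :
    𝒞 ⊓ dualCode 𝒞 = ⊥ := by
  -- 2 ≠ 0 in F
  have h2 : (2 : F) ≠ 0 := by
    intro h
    have hdvd : ringChar F ∣ 2 :=
      (CharP.cast_eq_zero_iff F (ringChar F) 2).mp (by exact_mod_cast h)
    have hchar : ringChar F = 2 :=
      (Nat.prime_dvd_prime_iff_eq (CharP.char_is_prime F _) Nat.prime_two).mp hdvd
    have := FiniteField.even_card_iff_char_two.mp hchar
    rw [Nat.odd_iff] at hodd; omega
  -- the three evaluation maps
  have h0 : (0 : F) ^ 3 = 0 := by ring
  have h1 : (1 : F) ^ 3 = 1 := by ring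
  have hm1 : (-1 : F) ^ 3 = -1 := by ring
  -- idempotents sum to 1
  have hc2 : algebraMap F (Rq F) 2⁻¹ * 2 = 1 := by
    rw [show ((2 : Rq F)) = algebraMap F (Rq F) 2 from (map_ofNat _ 2).symm,
      ← map_mul, inv_mul_cancel₀ h2, map_one]
  have hsum : (1 - vq F ^ 2) + algebraMap F (Rq F) 2⁻¹ * (vq F + vq F ^ 2) +
      algebraMap F (Rq F) 2⁻¹ * (vq F ^ 2 - vq F) = 1 := by
    linear_combination (vq F ^ 2) * hc2
  apply le_bot_iff.mp
  intro x hx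
  obtain ⟨hx1, hx2⟩ := hx
  obtain ⟨a, ha, b, hb, c, hc, hxeq⟩ := (h𝒞 x).mp hx1
  -- key: for any y ∈ C, the "diagonal" embedding of y lies in 𝒞
  have key : ∀ y ∈ C, ∑ i, x i * algebraMap F (Rq F) (y i) = 0 := by
    intro y hy
    have hz : (fun i => algebraMap F (Rq F) (y i)) ∈ 𝒞 := by
      refine (h𝒞 _).mpr ⟨y, hy, y, hy, y, hy, ?_⟩
      funext i
      linear_combination (- algebraMap F (Rq F) (y i)) * hsum
    exact hx2 _ hz
  -- apply the three evaluations
  have eval_mem : ∀ (r : F) (hr : r ^ 3 = r) (y : Fin n → F), y ∈ C →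
      ∑ i, evRq F r hr (x i) * y i = 0 := by
    intro r hr y hy
    have := congrArg (evRq F r hr) (key y hy)
    simpa [map_sum, map_mul, evRq_of, evRq_of'] using this
  have hxi : ∀ (r : F) (hr : r ^ 3 = r) (i : Fin n),
      evRq F r hr (x i) = (1 - r ^ 2) * a i + (2⁻¹ * (r + r ^ 2)) * b i +
        (2⁻¹ * (r ^ 2 - r)) * c i := by
    intro r hr i
    rw [hxeq]
    simp [map_add, map_mul, map_sub, map_one, map_pow, evRq_of, evRq_of', evRq_root]
  -- a, b, c lie in C ∩ C^⊥
  have hF2 : (2⁻¹ : F) * 2 = 1 := inv_mul_cancel₀ h2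
  have ha' : a ∈ dualCode C := by
    intro y hy
    have := eval_mem 0 h0 y hy
    simp only [hxi 0 h0] at this
    convert this using 2 with i
    ring
  have hb' : b ∈ dualCode C := by
    intro y hy
    have := eval_mem 1 h1 y hy
    simp only [hxi 1 h1] at this
    convert this using 2 with i
    linear_combination (- b i * y i) * hF2
  have hc' : c ∈ dualCode C := by
    intro y hy
    have := eval_mem (-1) hm1 y hy
    simp only [hxi (-1) hm1] at this
    convert this using 2 with i
    linear_combination (- c i * y i) * hF2
  have ha0 : a = 0 := by
    have : a ∈ C ⊓ dualCode C := ⟨ha, ha'⟩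
    rwa [hLCD, Submodule.mem_bot] at this
  have hb0 : b = 0 := by
    have : b ∈ C ⊓ dualCode C := ⟨hb, hb'⟩
    rwa [hLCD, Submodule.mem_bot] at this
  have hc0 : c = 0 := by
    have : c ∈ C ⊓ dualCode C := ⟨hc, hc'⟩
    rwa [hLCD, Submodule.mem_bot] at this
  rw [Submodule.mem_bot, hxeq, ha0, hb0, hc0]
  funext i
  simp
end

section
/- Let G be a k × n generator matrix of a linear code C over F_q (the rows of G span C and are linearly independent). Then C ∩ C^⊥ = {0} if and only if the k × k matrix G·Gᵗ is invertible. -/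
open Polynomial

/-- Massey's criterion: if `G` is a generator matrix of an `[n,k]` linear code `C`
over `F_q` (rows span `C` and are linearly independent), then `C ∩ C^⊥ = {0}` if and
only if the `k × k` matrix `G·Gᵗ` is nonsingular. -/
theorem stmt_8 (F : Type*) [Field F] [Fintype F] (n k : ℕ)
    (G : Matrix (Fin k) (Fin n) F)
    (hind : LinearIndependent F (fun i => G i)) :
    Submodule.span F (Set.range fun i => G i) ⊓
        dualCode (Submodule.span F (Set.range fun i => G i)) = ⊥ ↔
      IsUnit (G * G.transpose) := by
  have key : ∀ v : Fin k → F, (Matrix.vecMul v G = ∑ i, v i • G i) := by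
    intro v; ext j; simp [Matrix.vecMul, dotProduct, Finset.sum_apply]
  have key2 : ∀ v : Fin k → F, ∀ j, (Matrix.vecMul v (G * G.transpose)) j
      = ∑ i, (Matrix.vecMul v G) i * G j i := by
    intro v j
    rw [← Matrix.vecMul_vecMul]
    simp [Matrix.vecMul, dotProduct, Matrix.transpose_apply]
  rw [Matrix.isUnit_iff_isUnit_det, isUnit_iff_ne_zero, ne_eq,
    ← Matrix.exists_vecMul_eq_zero_iff]
  constructor
  · intro h
    rintro ⟨v, hv0, hv⟩
    set x := Matrix.vecMul v G with hx
    have hxC : x ∈ Submodule.span F (Set.range fun i => G i) := by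
      rw [hx, key]
      exact Submodule.sum_mem _ fun i _ =>
        Submodule.smul_mem _ _ (Submodule.subset_span (Set.mem_range_self i))
    have hxD : x ∈ dualCode (Submodule.span F (Set.range fun i => G i)) := by
      intro y hy
      induction hy using Submodule.span_induction with
      | mem y hy =>
        obtain ⟨j, rfl⟩ := hy
        rw [← key2 v j, hv]; rfl
      | zero => simp
      | add a b _ _ ha hb => simp [Pi.add_apply, mul_add, Finset.sum_add_distrib, ha, hb]
      | smul c a _ ha => simp [Pi.smul_apply, smul_eq_mul, mul_left_comm, ← Finset.mul_sum, ha]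
    have hx0 : x = 0 := by
      have := h ▸ (Submodule.mem_inf.mpr ⟨hxC, hxD⟩)
      simpa using this
    exact hv0 (funext (Fintype.linearIndependent_iff.mp hind v (by rw [← key, ← hx, hx0])))
  · intro h
    rw [eq_bot_iff]
    rintro x ⟨hxC, hxD⟩
    obtain ⟨v, rfl⟩ := (Submodule.mem_span_range_iff_exists_fun F).mp hxC
    by_contra hx0
    have hv0 : v ≠ 0 := by rintro rfl; simp at hx0
    refine h ⟨v, hv0, ?_⟩
    ext j
    rw [key2 v j, key]
    exact hxD (G j) (Submodule.subset_span (Set.mem_range_self j))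
end

section
/- Let C be a cyclic code over F_q of length n with gcd(n, q) = 1, generated by a monic divisor f(x) of xⁿ - 1. Then C is LCD if and only if f(x) is self-reciprocal, i.e., f(x) = x^{deg f} · f(1/x) up to a unit scalar. -/
open Polynomial

namespace Stmt9
variable {F : Type*} [Field F] {n : ℕ}

noncomputable def P (n : ℕ) (x : Fin n → F) : F[X] := ∑ i : Fin n, C (x i) * X ^ (i : ℕ)

lemma coeff_P (x : Fin n → F) (i : Fin n) : (P n x).coeff i = x i := by
  simp only [P, finset_sum_coeff, coeff_C_mul, coeff_X_pow]
  rw [Finset.sum_eq_single i] <;> simp +contextual [Fin.val_eq_val, eq_comm]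

lemma coeff_P_ge (x : Fin n → F) {k : ℕ} (hk : n ≤ k) : (P n x).coeff k = 0 := by
  simp only [P, finset_sum_coeff, coeff_C_mul, coeff_X_pow]
  refine Finset.sum_eq_zero fun i _ => ?_
  have : (i : ℕ) ≠ k := fun h => absurd (h ▸ i.isLt) (by omega)
  simp [Ne.symm this]

lemma natDegree_P_le (hn : 0 < n) (x : Fin n → F) : (P n x).natDegree ≤ n - 1 := by
  refine natDegree_sum_le_of_forall_le _ _ fun i _ => ?_
  refine (natDegree_C_mul_le _ _).trans ?_
  simp only [natDegree_X_pow]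
  omega

lemma P_eq_zero_iff (x : Fin n → F) : P n x = 0 ↔ x = 0 := by
  constructor
  · intro h; funext i
    have := coeff_P x i; rw [h] at this; simpa using this.symm
  · rintro rfl; simp [P]

lemma P_coeffs (a : F[X]) (ha : a.natDegree < n) : P n (fun i => a.coeff i) = a := by
  ext k
  rcases lt_or_ge k n with hk | hk
  · exact coeff_P (fun i => a.coeff i) ⟨k, hk⟩
  · rw [coeff_P_ge _ hk, coeff_eq_zero_of_natDegree_lt (by omega)]

lemma inner_eq (hn : 0 < n) (x y : Fin n → F) :
    ∑ i, x i * y i = (P n x * reflect (n - 1) (P n y)).coeff (n - 1) := by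
  rw [coeff_mul, Finset.Nat.sum_antidiagonal_eq_sum_range_succ_mk]
  have hn1 : (n - 1).succ = n := by omega
  rw [hn1]
  rw [← Fin.sum_univ_eq_sum_range (fun k => (P n x).coeff k * (reflect (n-1) (P n y)).coeff (n-1-k)) n]
  refine Finset.sum_congr rfl fun i _ => ?_
  rw [coeff_P, coeff_reflect, revAt_le (by omega : n - 1 - (i:ℕ) ≤ n - 1)]
  have : n - 1 - (n - 1 - (i:ℕ)) = (i : ℕ) := by omega
  rw [this, coeff_P]


lemma reflect_reflect (N : ℕ) (f : F[X]) (hf : f.natDegree ≤ N) :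
    reflect N (reflect N f) = f := by
  ext k
  rw [coeff_reflect, coeff_reflect, revAt_invol]

/-- Key structural identity: `f * reflect (n-1) b = reflect (d + (n-1)) (f.reverse * b)`. -/
lemma key_reflect (f b : F[X]) (hf0 : f.coeff 0 ≠ 0) (hb : b.natDegree ≤ n - 1) :
    f * reflect (n - 1) b = reflect (f.natDegree + (n - 1)) (f.reverse * b) := by
  rw [reflect_mul f.reverse b (by
        rw [reverse_natDegree]; omega) hb]
  congr 1
  have : f.reverse = reflect f.natDegree f := rfl
  rw [this, reflect_reflect _ _ le_rfl]


lemma coeff_formula (hn : 0 < n) (f b q : F[X]) (hf0 : f.coeff 0 ≠ 0)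
    (hb : b.natDegree ≤ n - 1) :
    (q * f * reflect (n - 1) b).coeff (n - 1)
      = ∑ i ∈ Finset.range n, q.coeff i * (f.reverse * b).coeff (f.natDegree + i) := by
  rw [mul_assoc, key_reflect f b hf0 hb, coeff_mul,
    Finset.Nat.sum_antidiagonal_eq_sum_range_succ_mk, (show (n-1).succ = n by omega)]
  refine Finset.sum_congr rfl fun i hi => ?_
  have hi' : i ≤ n - 1 := by have := Finset.mem_range.mp hi; omega
  rw [coeff_reflect, revAt_le (by omega : n - 1 - i ≤ f.natDegree + (n - 1))]
  congr 2
  omega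

lemma lemA (hn : 0 < n) {f h b : F[X]} (hfm : f.Monic) (hhm : h.Monic)
    (hfh : f * h = X ^ n - 1) (hf0 : f.coeff 0 ≠ 0) (hb : b.natDegree ≤ n - 1) :
    (∀ a : F[X], f ∣ a → a.natDegree < n → (a * reflect (n - 1) b).coeff (n - 1) = 0)
      ↔ (X ^ n - 1) ∣ f.reverse * b := by
  have hfne : f ≠ 0 := hfm.ne_zero
  have hhne : h ≠ 0 := hhm.ne_zero
  have hXn : (X ^ n - 1 : F[X]).natDegree = n := by
    simpa using natDegree_X_pow_sub_C (n := n) (r := (1 : F))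
  have hdn : f.natDegree + h.natDegree = n := by
    rw [← natDegree_mul hfne hhne, hfh, hXn]
  have hfrevdeg : f.reverse.natDegree = f.natDegree := by
    rw [reverse_natDegree, natTrailingDegree_eq_zero.mpr (Or.inr hf0), Nat.sub_zero]
  have hfrevne : f.reverse ≠ 0 := by rwa [Ne, reverse_eq_zero]
  have hXnrev : (X ^ n - 1 : F[X]).reverse = 1 - X ^ n := by
    rw [reverse, hXn, reflect_sub, ← pow_zero (X : F[X]), reflect_monomial, reflect_monomial,
      revAt_le (le_refl n), revAt_le (Nat.zero_le n), Nat.sub_self, Nat.sub_zero, pow_zero]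
  have hrevmul : f.reverse * h.reverse = 1 - X ^ n := by
    rw [← hXnrev, ← hfh, reverse_mul (by rw [hfm.leadingCoeff, hhm.leadingCoeff]; simp)]
  have hdvdrev : f.reverse ∣ X ^ n - 1 := ⟨-h.reverse, by rw [mul_neg, hrevmul]; ring⟩
  set u := f.reverse * b with hu_def
  have hudeg : u ≠ 0 → u.natDegree ≤ f.natDegree + (n - 1) := by
    intro hune
    have hbne : b ≠ 0 := by rintro rfl; simp [hu_def] at hune
    rw [hu_def, natDegree_mul hfrevne hbne, hfrevdeg]
    omega
  constructor
  · intro hcond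
    have hvan : ∀ k, f.natDegree ≤ k → k < n → u.coeff k = 0 := by
      intro k hk1 hk2
      have hXk : (X ^ (k - f.natDegree) * f).natDegree = k := by
        rw [natDegree_mul (pow_ne_zero _ X_ne_zero) hfne, natDegree_X_pow]; omega
      have ha := hcond (X ^ (k - f.natDegree) * f) (Dvd.intro_left _ rfl) (by omega)
      rw [coeff_formula hn f b _ hf0 hb] at ha
      rw [Finset.sum_eq_single (k - f.natDegree)] at ha
      · rwa [coeff_X_pow, if_pos rfl, one_mul,
          (show f.natDegree + (k - f.natDegree) = k by omega)] at ha
      · intro i _ hne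
        rw [coeff_X_pow, if_neg hne, zero_mul]
      · intro hmem
        exact absurd (Finset.mem_range.mpr (by omega)) hmem
    rcases eq_or_ne u 0 with hu0 | hune
    · exact hu0 ▸ dvd_zero _
    set D := u /ₘ X ^ n with hD_def
    set A := u %ₘ X ^ n with hA_def
    have hXnm : (X ^ n : F[X]).Monic := monic_X_pow n
    have hu : A + X ^ n * D = u := modByMonic_add_div u (X ^ n)
    have hAdeglt : A.natDegree < n := by
      have := degree_modByMonic_lt u hXnm
      rw [degree_X_pow] at this
      rcases eq_or_ne A 0 with h0 | h0
      · rw [h0]; simpa using hn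
      · exact natDegree_lt_iff_degree_lt h0 |>.mpr (by exact_mod_cast this)
    have hAcoeff : ∀ k, f.natDegree ≤ k → A.coeff k = 0 := by
      intro k hk
      rcases lt_or_ge k n with h1 | h1
      · have hXD : (X ^ n * D).coeff k = 0 := by
          rw [mul_comm, coeff_mul_X_pow', if_neg (by omega)]
        have := congrArg (fun p => Polynomial.coeff p k) hu
        simp only [coeff_add, hXD, add_zero] at this
        rw [this]; exact hvan k hk h1
      · exact coeff_eq_zero_of_natDegree_lt (by omega)
    have hAdeg : A ≠ 0 → A.natDegree < f.natDegree := by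
      intro h0
      by_contra hge
      exact (leadingCoeff_ne_zero.mpr h0) (hAcoeff _ (by omega))
    have hDdeg : D ≠ 0 → D.natDegree + n ≤ f.natDegree + (n - 1) := by
      intro hDne
      have hXDdeg : (X ^ n * D).natDegree = n + D.natDegree := by
        rw [natDegree_mul (pow_ne_zero _ X_ne_zero) hDne, natDegree_X_pow]
      have : u.natDegree = n + D.natDegree := by
        rw [← hu, natDegree_add_eq_right_of_natDegree_lt (by omega), hXDdeg]
      have := hudeg hune
      omega
    have hADzero : A + D = 0 := by
      by_contra hne
      have hdvdAD : f.reverse ∣ A + D := by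
        have h1 : f.reverse ∣ u := dvd_mul_right _ _
        have h2 : f.reverse ∣ (X ^ n - 1) * D := hdvdrev.mul_right D
        have heq : A + D = u - (X ^ n - 1) * D := by rw [← hu]; ring
        rw [heq]; exact dvd_sub h1 h2
      have hle := natDegree_le_of_dvd hdvdAD hne
      rw [hfrevdeg] at hle
      have hAD : (A + D).natDegree < f.natDegree ∨ (A = 0 ∧ D = 0) := by
        rcases eq_or_ne A 0 with hA0 | hA0 <;> rcases eq_or_ne D 0 with hD0 | hD0
        · exact Or.inr ⟨hA0, hD0⟩
        · left
          have := hDdeg hD0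
          calc (A + D).natDegree ≤ max A.natDegree D.natDegree := natDegree_add_le A D
            _ < f.natDegree := by simp [hA0]; omega
        · left
          have := hAdeg hA0
          calc (A + D).natDegree ≤ max A.natDegree D.natDegree := natDegree_add_le A D
            _ < f.natDegree := by simp [hD0]; omega
        · left
          have h3 := hAdeg hA0
          have h4 := hDdeg hD0
          calc (A + D).natDegree ≤ max A.natDegree D.natDegree := natDegree_add_le A D
            _ < f.natDegree := by omega
      rcases hAD with hlt | ⟨hA0, hD0⟩
      · omega
      · exact hne (by rw [hA0, hD0, add_zero])
    refine ⟨D, ?_⟩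
    have hA : A = -D := by linear_combination hADzero
    rw [← hu, hA]; ring
  · rintro ⟨D, hD⟩ a hfa han
    rcases eq_or_ne a 0 with rfl | hane
    · simp
    obtain ⟨q, rfl⟩ := hfa
    have hqne : q ≠ 0 := fun hq => hane (by rw [hq, mul_zero])
    rw [mul_comm f q, coeff_formula hn f b q hf0 hb]
    have hDdeg : D ≠ 0 → D.natDegree < f.natDegree := by
      intro hDne
      have hune : u ≠ 0 := by
        rw [hD]
        exact mul_ne_zero (fun hc => by
          have := congrArg Polynomial.natDegree hc
          rw [hXn] at this; simp at this; omega) hDne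
      have h1 := hudeg hune
      have h2 : u.natDegree = n + D.natDegree := by
        rw [hD, natDegree_mul (fun hc => by
          have := congrArg Polynomial.natDegree hc
          rw [hXn] at this; simp at this; omega) hDne, hXn]
      omega
    refine Finset.sum_eq_zero fun i hi => ?_
    rcases eq_or_ne (q.coeff i) 0 with h0 | h0
    · rw [h0, zero_mul]
    have hiq : i ≤ q.natDegree := le_natDegree_of_ne_zero h0
    have hlt : f.natDegree + i < n := by
      have := natDegree_mul hfne hqne
      rw [this] at han
      omega
    have : u.coeff (f.natDegree + i) = 0 := by
      rw [hD]
      have e1 : ((X ^ n - 1) * D).coeff (f.natDegree + i)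
          = (X ^ n * D).coeff (f.natDegree + i) - D.coeff (f.natDegree + i) := by
        rw [sub_mul, one_mul, coeff_sub]
      rw [e1, mul_comm, coeff_mul_X_pow', if_neg (by omega)]
      rcases eq_or_ne D 0 with rfl | hDne
      · simp
      · rw [coeff_eq_zero_of_natDegree_lt (by have := hDdeg hDne; omega)]; ring
    rw [this, mul_zero]

end Stmt9

open Stmt9 in
/-- Let `C` be a cyclic code over `F_q` of length `n` with `gcd(n, q) = 1`, generated
by a monic divisor `f` of `Xⁿ - 1`. Then `C` is LCD if and only if `f` is
self-reciprocal (equal to its reciprocal up to a unit scalar). -/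

theorem stmt_9 (F : Type*) [Field F] [Fintype F] (n : ℕ) (hn : 0 < n)
    (hco : Nat.Coprime n (Fintype.card F))
    (f : F[X]) (hmonic : f.Monic) (hdvd : f ∣ X ^ n - 1)
    (Cc : Submodule F (Fin n → F))
    (hCc : ∀ x : Fin n → F,
      x ∈ Cc ↔ f ∣ ∑ i : Fin n, Polynomial.C (x i) * X ^ (i : ℕ)) :
    Cc ⊓ dualCode Cc = ⊥ ↔ ∃ c : F, IsUnit c ∧ f.reverse = Polynomial.C c * f := by

  classical
  -- basic setup
  have hCc' : ∀ x : Fin n → F, x ∈ Cc ↔ f ∣ P n x := hCc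
  have hXnm : (X ^ n - 1 : F[X]).Monic := by
    simpa using monic_X_pow_sub_C (1 : F) (by omega : n ≠ 0)
  obtain ⟨h, hfh⟩ := hdvd
  have hhm : h.Monic := hmonic.of_mul_monic_left (hfh ▸ hXnm)
  have hfne : f ≠ 0 := hmonic.ne_zero
  have hhne : h ≠ 0 := hhm.ne_zero
  have hXn : (X ^ n - 1 : F[X]).natDegree = n := by
    simpa using natDegree_X_pow_sub_C (n := n) (r := (1 : F))
  have hdn : f.natDegree + h.natDegree = n := by
    rw [← natDegree_mul hfne hhne, ← hfh, hXn]
  have hXn0 : (X ^ n - 1 : F[X]).coeff 0 ≠ 0 := by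
    rw [coeff_sub, coeff_X_pow, if_neg (by omega), coeff_one, if_pos rfl]
    simp
  have hf0 : f.coeff 0 ≠ 0 := by
    intro h0
    exact hXn0 (X_dvd_iff.mp ((X_dvd_iff.mpr h0).trans ⟨h, hfh⟩))
  have hh0 : h.coeff 0 ≠ 0 := by
    intro h0
    exact hXn0 (X_dvd_iff.mp ((X_dvd_iff.mpr h0).trans ⟨f, by rw [hfh]; ring⟩))
  have hfrevdeg : f.reverse.natDegree = f.natDegree := by
    rw [reverse_natDegree, natTrailingDegree_eq_zero.mpr (Or.inr hf0), Nat.sub_zero]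
  have hhrevdeg : h.reverse.natDegree = h.natDegree := by
    rw [reverse_natDegree, natTrailingDegree_eq_zero.mpr (Or.inr hh0), Nat.sub_zero]
  have hfrevne : f.reverse ≠ 0 := by rwa [Ne, reverse_eq_zero]
  have hhrevne : h.reverse ≠ 0 := by rwa [Ne, reverse_eq_zero]
  have hXnrev : (X ^ n - 1 : F[X]).reverse = 1 - X ^ n := by
    rw [reverse, hXn, reflect_sub, ← pow_zero (X : F[X]), reflect_monomial, reflect_monomial,
      revAt_le (le_refl n), revAt_le (Nat.zero_le n), Nat.sub_self, Nat.sub_zero, pow_zero]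
  have hrevmul : f.reverse * h.reverse = 1 - X ^ n := by
    rw [← hXnrev, hfh, reverse_mul (by rw [hmonic.leadingCoeff, hhm.leadingCoeff]; simp)]
  -- dual code membership characterization
  have hdualmem : ∀ x : Fin n → F,
      x ∈ dualCode Cc ↔ (X ^ n - 1) ∣ f.reverse * P n x := by
    intro x
    have hstep : x ∈ dualCode Cc ↔
        (∀ a : F[X], f ∣ a → a.natDegree < n →
          (a * reflect (n - 1) (P n x)).coeff (n - 1) = 0) := by
      constructor
      · intro hx a hfa han
        set z : Fin n → F := fun i => a.coeff i with hz
        have hPz : P n z = a := P_coeffs a han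
        have hzC : z ∈ Cc := (hCc' z).mpr (hPz ▸ hfa)
        have := hx z hzC
        rw [show (∑ i, x i * z i) = ∑ i, z i * x i from
          Finset.sum_congr rfl fun i _ => mul_comm _ _] at this
        rw [inner_eq hn z x, hPz] at this
        exact this
      · intro hcond z hz
        have h1 := hcond (P n z) ((hCc' z).mp hz) (by have := natDegree_P_le hn z; omega)
        rw [show (∑ i, x i * z i) = ∑ i, z i * x i from
          Finset.sum_congr rfl fun i _ => mul_comm _ _, inner_eq hn z x]
        exact h1
    rw [hstep]
    exact lemA hn hmonic hhm hfh.symm hf0 (natDegree_P_le hn x)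
  -- LCD in polynomial terms
  have hLCD : Cc ⊓ dualCode Cc = ⊥ ↔
      ∀ a : F[X], a.natDegree < n → f ∣ a → (X ^ n - 1) ∣ f.reverse * a → a = 0 := by
    rw [Submodule.eq_bot_iff]
    constructor
    · intro hbot a han hfa hra
      set z : Fin n → F := fun i => a.coeff i with hz
      have hPz : P n z = a := P_coeffs a han
      have hzmem : z ∈ Cc ⊓ dualCode Cc := by
        rw [Submodule.mem_inf]
        exact ⟨(hCc' z).mpr (hPz ▸ hfa), (hdualmem z).mpr (hPz ▸ hra)⟩
      have := hbot z hzmem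
      rw [← hPz, this, (P_eq_zero_iff (0 : Fin n → F)).mpr rfl]
    · intro hcond x hx
      rw [Submodule.mem_inf] at hx
      have h1 := (hCc' x).mp hx.1
      have h2 := (hdualmem x).mp hx.2
      have := hcond (P n x) (by have := natDegree_P_le hn x; omega) h1 h2
      exact (P_eq_zero_iff x).mp this
  rw [hLCD]
  -- characteristic fact
  have hnF : (n : F) ≠ 0 := by
    intro hc
    have hp := ringChar.charP F
    have hdvdn : ringChar F ∣ n := (CharP.cast_eq_zero_iff F (ringChar F) n).mp hc
    obtain ⟨k, hprime, hcard⟩ := FiniteField.card F (ringChar F)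
    have hdvdq : ringChar F ∣ Fintype.card F := hcard ▸ dvd_pow_self _ (by positivity)
    have := Nat.dvd_gcd hdvdn hdvdq
    rw [hco] at this
    have h1 := Nat.dvd_one.mp this
    exact absurd h1 (Nat.Prime.ne_one hprime)
  have hsep : (X ^ n - 1 : F[X]).Separable := by
    simpa using separable_X_pow_sub_C (1 : F) hnF one_ne_zero
  have hsq : Squarefree (X ^ n - 1 : F[X]) := hsep.squarefree
  constructor
  · -- LCD → self-reciprocal
    intro hcond
    have hcop : IsCoprime f h.reverse := by
      rw [← EuclideanDomain.gcd_isUnit_iff]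
      by_contra hgu
      set g := EuclideanDomain.gcd f h.reverse with hg
      obtain ⟨s, hs⟩ := EuclideanDomain.gcd_dvd_left f h.reverse
      obtain ⟨r, hr⟩ := EuclideanDomain.gcd_dvd_right f h.reverse
      rw [← hg] at hs hr
      have hgne : g ≠ 0 := fun h0 => hfne (by rw [hs, h0, zero_mul])
      have hrne : r ≠ 0 := fun h0 => hhrevne (by rw [hr, h0, mul_zero])
      have hsne : s ≠ 0 := fun h0 => hfne (by rw [hs, h0, mul_zero])
      have hg1 : 1 ≤ g.natDegree := by
        by_contra hlt
        have hg0 : g.natDegree = 0 := by omega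
        obtain ⟨c, hc⟩ := natDegree_eq_zero.mp hg0
        exact hgu (hc ▸ isUnit_C.mpr (isUnit_iff_ne_zero.mpr
          (fun h0 => hgne (by rw [← hc, h0, map_zero]))))
      have hgr : g.natDegree + r.natDegree = h.natDegree := by
        rw [← hhrevdeg, hr, natDegree_mul hgne hrne]
      have hadeg : (f * r).natDegree < n := by
        rw [natDegree_mul hfne hrne]; omega
      have hadvd : (X ^ n - 1) ∣ f.reverse * (f * r) := by
        refine ⟨-s, ?_⟩
        have e1 : f.reverse * (f * r) = (f.reverse * (g * r)) * s := by rw [hs]; ring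
        rw [e1, ← hr, hrevmul]; ring
      have := hcond (f * r) hadeg (dvd_mul_right f r) hadvd
      exact (mul_ne_zero hfne hrne) this
    have hfdvd : f ∣ f.reverse := by
      have h1 : f ∣ f.reverse * h.reverse := by
        refine ⟨-h, ?_⟩
        rw [hrevmul]
        have := hfh
        linear_combination -hfh
      exact hcop.dvd_of_dvd_mul_right h1
    obtain ⟨w, hw⟩ := hfdvd
    have hwne : w ≠ 0 := fun h0 => hfrevne (by rw [hw, h0, mul_zero])
    have hwdeg : w.natDegree = 0 := by
      have := natDegree_mul hfne hwne
      rw [← hw, hfrevdeg] at this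
      omega
    obtain ⟨c, hc⟩ := natDegree_eq_zero.mp hwdeg
    refine ⟨c, isUnit_iff_ne_zero.mpr (fun h0 => hwne (by rw [← hc, h0, map_zero])), ?_⟩
    rw [hw, ← hc]; ring
  · -- self-reciprocal → LCD
    rintro ⟨c, hcu, hcrev⟩ a han hfa hra
    by_contra hane
    -- coprimality of f and h
    have hcop : IsCoprime f h := by
      rw [← EuclideanDomain.gcd_isUnit_iff]
      refine hsq _ ?_
      calc EuclideanDomain.gcd f h * EuclideanDomain.gcd f h ∣ f * h :=
            mul_dvd_mul (EuclideanDomain.gcd_dvd_left f h) (EuclideanDomain.gcd_dvd_right f h)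
        _ = X ^ n - 1 := hfh.symm
    -- h ∣ a
    have h1 : f * h ∣ C c * (f * a) := by
      rw [← hfh]
      have : C c * (f * a) = f.reverse * a := by rw [hcrev]; ring
      rw [this]; exact hra
    have hCc_unit : IsUnit (C c : F[X]) := isUnit_C.mpr hcu
    have h2 : f * h ∣ f * a := (hCc_unit.dvd_mul_left).mp h1
    have h3 : h ∣ a := (mul_dvd_mul_iff_left hfne).mp h2
    have h4 : f * h ∣ a := hcop.mul_dvd hfa h3
    have := natDegree_le_of_dvd h4 hane
    rw [natDegree_mul hfne hhne] at this
    omega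
end

section
/- Let W be an n × n matrix over F_q with entries in {0, 1, -1} satisfying W·Wᵗ = k·I_n (a weighing matrix of weight k), and let α ∈ F_q be nonzero with α² + k ≠ 0 in F_q. Then the n × 2n matrix G = [αI_n | W] generates an LCD [2n, n] code over F_q. -/
/-- Let `W` be an `n × n` weighing matrix of weight `k` over `F_q` (entries in
`{0, 1, -1}`, `W·Wᵗ = k·Iₙ`) and `α ∈ F_q` nonzero with `α² + k ≠ 0`. Then
`G = [αIₙ | W]` generates an LCD `[2n, n]` code over `F_q`. -/
theorem stmt_11 (F : Type*) [Field F] [Fintype F] (n k : ℕ)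
    (W : Matrix (Fin n) (Fin n) F)
    (hent : ∀ i j, W i j = 0 ∨ W i j = 1 ∨ W i j = -1)
    (hW : W * W.transpose = (k : F) • (1 : Matrix (Fin n) (Fin n) F))
    (α : F) (hα : α ≠ 0) (hαk : α ^ 2 + (k : F) ≠ 0) :
    let G : Fin n → (Fin (n + n) → F) :=
      fun i => Fin.append ((α • (1 : Matrix (Fin n) (Fin n) F)) i) (W i)
    Submodule.span F (Set.range G) ⊓ dualCode (Submodule.span F (Set.range G)) = ⊥ ∧
      Module.finrank F (Submodule.span F (Set.range G)) = n := by
  intro G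
  have key : ∀ i j, ∑ t, G i t * G j t = (α ^ 2 + (k : F)) * (if i = j then 1 else 0) := by
    intro i j
    have h2 : ∑ t, W i t * W j t = (k : F) * (if i = j then 1 else 0) := by
      have := congrFun (congrFun hW i) j
      simpa [Matrix.mul_apply, Matrix.transpose_apply, Matrix.smul_apply,
        Matrix.one_apply] using this
    rw [show (∑ t, G i t * G j t) = ∑ t : Fin n, G i (Fin.castAdd n t) * G j (Fin.castAdd n t)
        + ∑ t : Fin n, G i (Fin.natAdd n t) * G j (Fin.natAdd n t) from Fin.sum_univ_add _]
    simp only [G, Fin.append_left, Fin.append_right, Matrix.smul_apply, Matrix.one_apply,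
      smul_eq_mul, mul_ite, mul_one, mul_zero, ite_mul, zero_mul]
    rw [Finset.sum_ite_eq, h2]
    by_cases h : i = j <;> simp [h, eq_comm, sq] <;> ring
  have hli : LinearIndependent F G := by
    rw [Fintype.linearIndependent_iff]
    intro c hc j
    have := congrFun hc (Fin.castAdd n j)
    simp only [Finset.sum_apply, Pi.smul_apply, smul_eq_mul, G, Fin.append_left,
      Matrix.smul_apply, Matrix.one_apply, smul_eq_mul, mul_ite, mul_one, mul_zero,
      Pi.zero_apply] at this
    rw [Finset.sum_ite_eq' _ j] at this
    simp at this
    rcases this with h | h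
    · exact h
    · exact absurd h hα
  refine ⟨?_, ?_⟩
  · rw [eq_bot_iff]
    rintro x ⟨hx1, hx2⟩
    obtain ⟨c, rfl⟩ := (Finsupp.mem_span_range_iff_exists_finsupp).mp hx1
    have hc : ∀ j, c j = 0 := by
      intro j
      have hGj : G j ∈ Submodule.span F (Set.range G) :=
        Submodule.subset_span (Set.mem_range_self j)
      have h0 := hx2 (G j) hGj
      simp only [Finsupp.sum, Finset.sum_apply, Pi.smul_apply, smul_eq_mul] at h0
      rw [show (∑ t, (∑ i ∈ c.support, c i * G i t) * G j t)
          = ∑ i ∈ c.support, c i * ∑ t, G i t * G j t by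
        simp_rw [Finset.sum_mul]
        rw [Finset.sum_comm]
        simp [Finset.mul_sum, mul_assoc]] at h0
      simp only [key, mul_ite, mul_one, mul_zero] at h0
      by_cases hj : j ∈ c.support
      · rw [Finset.sum_ite_eq' _ j] at h0
        simp only [hj, if_true] at h0
        rcases mul_eq_zero.mp h0 with h | h
        · exact h
        · exact absurd h hαk
      · simpa using hj
    have : (c.sum fun i a => a • G i) = 0 := by
      rw [Finsupp.sum]
      apply Finset.sum_eq_zero
      intro i _
      rw [hc i, zero_smul]
    simp [this]
  · rw [finrank_span_eq_card hli, Fintype.card_fin]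
end

section
/- Let W be an n × n skew weighing matrix over F_q (W·Wᵗ = k·I_n and Wᵗ = -W), and α, β ∈ F_q nonzero with α² + β² + k ≠ 0 in F_q. Then G = [αI_n | βI_n + W] generates an LCD [2n, n] code over F_q. -/
/-- Let `W` be an `n × n` skew weighing matrix of weight `k` over `F_q`
(`W·Wᵗ = k·Iₙ`, `Wᵗ = -W`, entries in `{0, 1, -1}`) and `α, β ∈ F_q` nonzero with
`α² + β² + k ≠ 0`. Then `G = [αIₙ | βIₙ + W]` generates an LCD `[2n, n]` code. -/
theorem stmt_12 (F : Type*) [Field F] [Fintype F] (n k : ℕ)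
    (W : Matrix (Fin n) (Fin n) F)
    (hent : ∀ i j, W i j = 0 ∨ W i j = 1 ∨ W i j = -1)
    (hW : W * W.transpose = (k : F) • (1 : Matrix (Fin n) (Fin n) F))
    (hskew : W.transpose = -W)
    (α β : F) (hα : α ≠ 0) (hβ : β ≠ 0) (hαβk : α ^ 2 + β ^ 2 + (k : F) ≠ 0) :
    let G : Fin n → (Fin (n + n) → F) :=
      fun i => Fin.append ((α • (1 : Matrix (Fin n) (Fin n) F)) i)
        ((β • (1 : Matrix (Fin n) (Fin n) F) + W) i)
    Submodule.span F (Set.range G) ⊓ dualCode (Submodule.span F (Set.range G)) = ⊥ ∧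
      Module.finrank F (Submodule.span F (Set.range G)) = n := by
  intro G
  have hGcast : ∀ i j, G i (Fin.castAdd n j) = α * (if i = j then 1 else 0) := by
    intro i j
    simp [G, Fin.append_left, Matrix.smul_apply, Matrix.one_apply]
  have hGnat : ∀ i j, G i (Fin.natAdd n j) = β * (if i = j then 1 else 0) + W i j := by
    intro i j
    show Fin.append _ _ (Fin.natAdd n j) = _
    rw [Fin.append_right]
    simp [Matrix.add_apply, Matrix.smul_apply, Matrix.one_apply, mul_ite]
  have hWW : ∀ i j, ∑ l, W i l * W j l = (k : F) * (if i = j then 1 else 0) := by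
    intro i j
    have := congrFun (congrFun hW i) j
    simpa [Matrix.mul_apply, Matrix.transpose_apply, Matrix.smul_apply,
      Matrix.one_apply] using this
  have hskew' : ∀ i j, W j i = - W i j := by
    intro i j
    have := congrFun (congrFun hskew i) j
    simpa [Matrix.transpose_apply] using this
  have e1 : ∀ i j : Fin n, ∑ l : Fin n, (if i = l then (1:F) else 0) * (if j = l then 1 else 0)
      = if i = j then 1 else 0 := by
    intro i j
    simp [ite_mul, Finset.sum_ite_eq, eq_comm]
  have e2 : ∀ i j : Fin n, ∑ l : Fin n, (if i = l then (1:F) else 0) * W j l = W j i := by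
    intro i j
    simp [ite_mul, Finset.sum_ite_eq]
  have hinner : ∀ i j, ∑ l, G i l * G j l
      = (α ^ 2 + β ^ 2 + (k : F)) * (if i = j then 1 else 0) := by
    intro i j
    rw [Fin.sum_univ_add]
    have h1 : ∑ l : Fin n, G i (Fin.castAdd n l) * G j (Fin.castAdd n l)
        = α ^ 2 * (if i = j then 1 else 0) := by
      simp only [hGcast]
      have key : ∀ l : Fin n, (α * (if i = l then 1 else 0)) * (α * (if j = l then 1 else 0))
          = α ^ 2 * ((if i = l then 1 else 0) * (if j = l then 1 else 0)) := fun l => by ring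
      rw [Finset.sum_congr rfl (fun l _ => key l), ← Finset.mul_sum, e1]
    have h2 : ∑ l : Fin n, G i (Fin.natAdd n l) * G j (Fin.natAdd n l)
        = (β ^ 2 + (k : F)) * (if i = j then 1 else 0) := by
      simp only [hGnat]
      have key : ∀ l : Fin n,
          (β * (if i = l then 1 else 0) + W i l) * (β * (if j = l then 1 else 0) + W j l)
          = β ^ 2 * ((if i = l then 1 else 0) * (if j = l then 1 else 0))
            + β * ((if i = l then 1 else 0) * W j l)
            + β * ((if j = l then 1 else 0) * W i l)
            + W i l * W j l := by
        intro l; ring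
      rw [Finset.sum_congr rfl (fun l _ => key l)]
      rw [Finset.sum_add_distrib, Finset.sum_add_distrib, Finset.sum_add_distrib,
        ← Finset.mul_sum, ← Finset.mul_sum, ← Finset.mul_sum, hWW, e1, e2, e2,
        hskew' i j]
      ring
    rw [h1, h2]; ring
  have hLI : LinearIndependent F G := by
    rw [Fintype.linearIndependent_iff]
    intro g hg j
    have h := congrFun hg (Fin.castAdd n j)
    simp only [Finset.sum_apply, Pi.smul_apply, smul_eq_mul, Pi.zero_apply, hGcast,
      mul_ite, mul_one, mul_zero] at h
    rw [Finset.sum_ite_eq' Finset.univ j (fun i => g i * α)] at h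
    simp only [Finset.mem_univ, if_true] at h
    exact (mul_eq_zero.mp h).resolve_right hα
  constructor
  · rw [Submodule.eq_bot_iff]
    intro x hx
    obtain ⟨hx1, hx2⟩ := Submodule.mem_inf.mp hx
    obtain ⟨c, hc⟩ := (Finsupp.mem_span_range_iff_exists_finsupp).mp hx1
    have hc' : ∀ l, x l = ∑ i, c i * G i l := by
      intro l
      rw [← hc, Finsupp.sum_fintype]
      · simp
      · intro i; simp
    have hj : ∀ j, c j = 0 := by
      intro j
      have hd : ∑ l, x l * G j l = 0 :=
        hx2 (G j) (Submodule.subset_span ⟨j, rfl⟩)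
      have h0 : ∑ l, (∑ i, c i * G i l) * G j l = 0 := by
        calc ∑ l, (∑ i, c i * G i l) * G j l = ∑ l, x l * G j l :=
              Finset.sum_congr rfl (fun l _ => by rw [hc' l])
          _ = 0 := hd
      simp only [Finset.sum_mul] at h0
      rw [Finset.sum_comm] at h0
      have h2 : ∑ i, c i * ((α ^ 2 + β ^ 2 + (k:F)) * (if i = j then 1 else 0)) = 0 := by
        refine Eq.trans ?_ h0
        refine Finset.sum_congr rfl (fun i _ => ?_)
        rw [← hinner i j, Finset.mul_sum]
        exact Finset.sum_congr rfl (fun l _ => by ring)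
      simp only [mul_ite, mul_one, mul_zero] at h2
      rw [Finset.sum_ite_eq' Finset.univ j (fun i => c i * (α ^ 2 + β ^ 2 + (k:F)))] at h2
      simp only [Finset.mem_univ, if_true] at h2
      exact (mul_eq_zero.mp h2).resolve_right hαβk
    funext l
    rw [hc' l]
    simp [hj]
  · rw [finrank_span_eq_card hLI]
    simp
end

section
/- Let G = [I_k | P] be a generator matrix of a linear code over F_q with q ≡ 1 (mod 4), and let α ∈ F_q satisfy α² + 1 = 0. Then G' = [I_k | P | αP] generates an LCD code over F_q. -/
/-- Let `G = [I_k | P]` be a generator matrix of a linear code over `F_q` with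
`q ≡ 1 (mod 4)`, and `α ∈ F_q` with `α² + 1 = 0`. Then `G' = [I_k | P | αP]`
generates an LCD code over `F_q`. -/
theorem stmt_17 (F : Type*) [Field F] [Fintype F] (hq : Fintype.card F % 4 = 1)
    (n k : ℕ) (α : F) (hα : α ^ 2 + 1 = 0) (P : Matrix (Fin k) (Fin n) F) :
    let G' : Fin k → (Fin (k + n + n) → F) :=
      fun i => Fin.append (Fin.append ((1 : Matrix (Fin k) (Fin k) F) i) (P i)) ((α • P) i)
    Submodule.span F (Set.range G') ⊓ dualCode (Submodule.span F (Set.range G')) = ⊥ := by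
  intro G'
  have key : ∀ j m : Fin k, ∑ i, G' j i * G' m i = if j = m then 1 else 0 := by
    intro j m
    have hsplit : ∑ i, G' j i * G' m i
        = (∑ i : Fin k, (1 : Matrix (Fin k) (Fin k) F) j i * (1 : Matrix (Fin k) (Fin k) F) m i)
          + ((∑ i : Fin n, P j i * P m i) + ∑ i : Fin n, (α * P j i) * (α * P m i)) := by
      simp [G', Fin.sum_univ_add, Fin.append_left, Fin.append_right, add_assoc]
    have hP : (∑ i : Fin n, P j i * P m i) + ∑ i : Fin n, (α * P j i) * (α * P m i) = 0 := by
      rw [← Finset.sum_add_distrib]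
      apply Finset.sum_eq_zero
      intro i _
      have h1 : P j i * P m i + α * P j i * (α * P m i) = (α ^ 2 + 1) * (P j i * P m i) := by
        ring
      rw [h1, hα, zero_mul]
    rw [hsplit, hP, add_zero]
    simp [Matrix.one_apply]
  rw [Submodule.eq_bot_iff]
  rintro x hx
  rw [Submodule.mem_inf] at hx
  obtain ⟨hx1, hx2⟩ := hx
  rw [Submodule.mem_span_range_iff_exists_fun] at hx1
  obtain ⟨c, hc⟩ := hx1
  have hcm : ∀ m : Fin k, c m = 0 := by
    intro m
    have h := hx2 (G' m) (Submodule.subset_span (Set.mem_range_self m))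
    rw [← hc] at h
    simp only [Finset.sum_apply, Pi.smul_apply, smul_eq_mul, Finset.sum_mul] at h
    rw [Finset.sum_comm] at h
    simp only [mul_assoc, ← Finset.mul_sum] at h
    simp only [key, mul_ite, mul_one, mul_zero] at h
    simpa using h
  rw [← hc]
  simp [hcm]
end

section
/- Let M be an n × n λ-circulant matrix over a commutative ring S (row i+1 is the λ-twisted cyclic shift of row i). Then the code C generated by G = [I_n | M] and its dual C^⊥ are monomially equivalent; in particular C is formally self-dual (C and C^⊥ have the same weight enumerator). -/
section Aux
open Fin.NatCast Fin.CommRing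
variable {S : Type*} [CommRing S] {n : ℕ} [NeZero n] {lam : S}
variable {M : Matrix (Fin n) (Fin n) S}

lemma circ_step (hM : ∀ i j : Fin n, M (i + 1) j = (if j = 0 then lam else 1) * M i (j - 1))
    (i j : Fin n) : M (i + 1) (j + 1) = (if j = -1 then lam else 1) * M i j := by
  have h := hM i (j + 1)
  rw [add_sub_cancel_right] at h
  rw [h]
  congr 1
  simp [add_eq_zero_iff_eq_neg]

lemma circ_iter (hM : ∀ i j : Fin n, M (i + 1) j = (if j = 0 then lam else 1) * M i (j - 1))
    (k : ℕ) (i j : Fin n) :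
    M (i + (k : Fin n)) (j + (k : Fin n)) =
      (∏ t ∈ Finset.range k, if (j + (t : Fin n)) = -1 then lam else 1) * M i j := by
  induction k with
  | zero => simp
  | succ k ih =>
      have hc : ((k + 1 : ℕ) : Fin n) = (k : Fin n) + 1 := by push_cast; ring
      rw [hc, ← add_assoc, ← add_assoc, circ_step hM, ih, Finset.prod_range_succ]
      ring

lemma prod_eval (k : ℕ) (hk : k ≤ n) (d : Fin n) :
    (∏ t ∈ Finset.range k, if (d + (t : Fin n)) = -1 then lam else 1)
      = if ((-1 - d : Fin n)).val < k then lam else 1 := by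
  rw [Finset.prod_congr rfl (g := fun t => if t = ((-1 - d : Fin n)).val then lam else 1) ?_]
  · rw [Finset.prod_ite_eq' (Finset.range k) ((-1 - d : Fin n)).val (fun _ => lam)]
    simp [Finset.mem_range]
  · intro t ht
    rw [Finset.mem_range] at ht
    have h1 : (d + (t : Fin n) = -1) ↔ ((t : Fin n) = -1 - d) := by
      rw [eq_sub_iff_add_eq, add_comm]
    have h2 : ((t : Fin n) = -1 - d) ↔ (t = ((-1 - d : Fin n)).val) := by
      rw [Fin.ext_iff, Fin.val_cast_of_lt (lt_of_lt_of_le ht hk)]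
    simp only [h1.trans h2]

lemma sub_val_iff (u i : Fin n) : u.val < i.val ↔ u.val < (u - i).val := by
  have h : (u - i).val = ((n - i.val) + u.val) % n := by rw [Fin.sub_def]
  have hu := u.isLt
  have hi := i.isLt
  rcases le_or_gt i.val u.val with hle | hlt
  · have : ((n - i.val) + u.val) % n = u.val - i.val := by
      rw [show (n - i.val) + u.val = (u.val - i.val) + n by omega, Nat.add_mod_right]
      exact Nat.mod_eq_of_lt (by omega)
    omega
  · have : ((n - i.val) + u.val) % n = (n - i.val) + u.val := Nat.mod_eq_of_lt (by omega)
    omega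

lemma key_sym (hM : ∀ i j : Fin n, M (i + 1) j = (if j = 0 then lam else 1) * M i (j - 1))
    (i j : Fin n) : M i j = M (-1 - j) (-1 - i) := by
  have e1 : M i j = M ((0 : Fin n) + ((i.val : ℕ) : Fin n)) ((j - i) + ((i.val : ℕ) : Fin n)) := by
    rw [Fin.cast_val_eq_self, zero_add, sub_add_cancel]
  have e2 : M (-1 - j) (-1 - i)
      = M ((0 : Fin n) + ((((-1 - j : Fin n)).val : ℕ) : Fin n))
          ((j - i) + ((((-1 - j : Fin n)).val : ℕ) : Fin n)) := by
    rw [Fin.cast_val_eq_self, zero_add]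
    congr 1
    ring
  rw [e1, e2, circ_iter hM, circ_iter hM, prod_eval i.val i.isLt.le,
    prod_eval ((-1 - j : Fin n)).val ((-1 - j : Fin n)).isLt.le]
  congr 1
  have hrw : (-1 - j : Fin n) = (-1 - (j - i)) - i := by ring
  rw [hrw]
  exact if_congr (sub_val_iff (-1 - (j - i)) i) rfl rfl

lemma key_sym' (hM : ∀ i j : Fin n, M (i + 1) j = (if j = 0 then lam else 1) * M i (j - 1))
    (i k : Fin n) : M i (-1 - k) = M k (-1 - i) := by
  rw [key_sym hM k (-1 - i), sub_sub_cancel]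

end Aux

/-- Let `M` be an `n × n` `λ`-circulant matrix over a finite commutative ring `S`
(each row is the `λ`-twisted cyclic shift of the previous one, `λ` a unit). Then the
code `C` generated by `G = [Iₙ | M]` and its dual `C^⊥` are monomially equivalent
(via a coordinate permutation and multiplication of coordinates by `±1`); in
particular `C` is formally self-dual: `C` and `C^⊥` have the same Hamming weight
enumerator. -/
theorem stmt_18 (S : Type*) [CommRing S] [Fintype S] [DecidableEq S]
    (n : ℕ) [NeZero n] (lam : S) (hlam : IsUnit lam)
    (M : Matrix (Fin n) (Fin n) S)
    (hM : ∀ (i j : Fin n),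
      M (i + 1) j = (if j = 0 then lam else 1) * M i (j - 1)) :
    let G : Fin n → (Fin (n + n) → S) :=
      fun i => Fin.append ((1 : Matrix (Fin n) (Fin n) S) i) (M i)
    let C := Submodule.span S (Set.range G)
    (∃ (σ : Equiv.Perm (Fin (n + n))) (ε : Fin (n + n) → S),
      (∀ i, ε i = 1 ∨ ε i = -1) ∧
      ((dualCode C : Set (Fin (n + n) → S)) =
        (fun x : Fin (n + n) → S => fun i => ε i * x (σ i)) '' (C : Set (Fin (n + n) → S)))) ∧
    (∀ w : ℕ,
      Set.ncard {x : Fin (n + n) → S | x ∈ C ∧ hammingNorm x = w} =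
        Set.ncard {x : Fin (n + n) → S | x ∈ dualCode C ∧ hammingNorm x = w}) := by
  intro G C
  classical
  -- the reversal involution on `Fin n`
  set r : Fin n → Fin n := fun i => -1 - i with hr
  have hrr : ∀ i, r (r i) = i := fun i => by simp [hr, sub_sub_cancel]
  -- the permutation on `Fin (n+n)`
  set e : Fin (n + n) → Fin (n + n) :=
    Fin.addCases (motive := fun _ => Fin (n + n))
      (fun i => Fin.natAdd n (r i)) (fun j => Fin.castAdd n (r j)) with he
  have he_left : ∀ i, e (Fin.castAdd n i) = Fin.natAdd n (r i) := fun i => by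
    rw [he]; exact Fin.addCases_left i
  have he_right : ∀ j, e (Fin.natAdd n j) = Fin.castAdd n (r j) := fun j => by
    rw [he]; exact Fin.addCases_right j
  have hee : ∀ x, e (e x) = x := by
    intro x
    induction x using Fin.addCases with
    | left i => rw [he_left, he_right, hrr]
    | right j => rw [he_right, he_left, hrr]
  set σ : Equiv.Perm (Fin (n + n)) := ⟨e, e, hee, hee⟩ with hσ
  set ε : Fin (n + n) → S :=
    Fin.addCases (motive := fun _ => S) (fun _ => -1) (fun _ => 1) with hε
  have hε_left : ∀ i, ε (Fin.castAdd n i) = -1 := fun i => by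
    rw [hε]; exact Fin.addCases_left i
  have hε_right : ∀ j, ε (Fin.natAdd n j) = 1 := fun j => by
    rw [hε]; exact Fin.addCases_right j
  set φ : (Fin (n + n) → S) → (Fin (n + n) → S) :=
    fun x => fun i => ε i * x (σ i) with hφ
  -- parametrization of C
  set F : (Fin n → S) → (Fin (n + n) → S) :=
    fun c => Fin.addCases (motive := fun _ => S)
      (fun i => c i) (fun j => ∑ k, c k * M k j) with hF
  have hF_left : ∀ c i, F c (Fin.castAdd n i) = c i := fun c i => by
    rw [hF]; exact Fin.addCases_left i
  have hF_right : ∀ c j, F c (Fin.natAdd n j) = ∑ k, c k * M k j := fun c j => by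
    rw [hF]; exact Fin.addCases_right j
  have hG_left : ∀ k i, G k (Fin.castAdd n i) = (1 : Matrix (Fin n) (Fin n) S) k i :=
    fun k i => Fin.append_left _ _ i
  have hG_right : ∀ k j, G k (Fin.natAdd n j) = M k j :=
    fun k j => Fin.append_right _ _ j
  have hsum : ∀ c : Fin n → S, ∑ k, c k • G k = F c := by
    intro c
    funext idx
    rw [Finset.sum_apply]
    induction idx using Fin.addCases with
    | left i =>
        rw [hF_left]
        have : ∀ k, (c k • G k) (Fin.castAdd n i) = if k = i then c k else 0 := by
          intro k
          rw [Pi.smul_apply, hG_left, smul_eq_mul, Matrix.one_apply]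
          split <;> simp
        rw [Finset.sum_congr rfl fun k _ => this k]
        simp
    | right j =>
        rw [hF_right]
        refine Finset.sum_congr rfl fun k _ => ?_
        rw [Pi.smul_apply, hG_right, smul_eq_mul]
  have memC : ∀ x, x ∈ C ↔ ∃ c : Fin n → S, F c = x := by
    intro x
    rw [show C = Submodule.span S (Set.range G) from rfl,
      Submodule.mem_span_range_iff_exists_fun S]
    exact exists_congr fun c => by rw [hsum]
  -- characterization of the dual
  have memD : ∀ x, x ∈ dualCode C ↔
      ∀ i : Fin n, x (Fin.castAdd n i) + ∑ j, x (Fin.natAdd n j) * M i j = 0 := by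
    intro x
    constructor
    · intro h i
      have hGmem : G i ∈ C := Submodule.subset_span (Set.mem_range_self i)
      have := h (G i) hGmem
      rw [Fin.sum_univ_add] at this
      have h1 : ∑ k, x (Fin.castAdd n k) * G i (Fin.castAdd n k) = x (Fin.castAdd n i) := by
        have : ∀ k, x (Fin.castAdd n k) * G i (Fin.castAdd n k)
            = if k = i then x (Fin.castAdd n k) else 0 := by
          intro k
          rw [hG_left, Matrix.one_apply]
          by_cases hk : i = k
          · subst hk; simp
          · rw [if_neg hk, if_neg (fun h' => hk h'.symm), mul_zero]
        rw [Finset.sum_congr rfl fun k _ => this k]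
        simp
      have h2 : ∀ j, x (Fin.natAdd n j) * G i (Fin.natAdd n j)
          = x (Fin.natAdd n j) * M i j := fun j => by rw [hG_right]
      rw [h1, Finset.sum_congr rfl fun j _ => h2 j] at this
      exact this
    · intro h y hy
      obtain ⟨c, rfl⟩ := (memC y).1 hy
      rw [Fin.sum_univ_add]
      have h1 : ∑ i, x (Fin.castAdd n i) * F c (Fin.castAdd n i)
          = ∑ i, x (Fin.castAdd n i) * c i :=
        Finset.sum_congr rfl fun i _ => by rw [hF_left]
      have h2 : ∑ j, x (Fin.natAdd n j) * F c (Fin.natAdd n j)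
          = ∑ k, c k * ∑ j, x (Fin.natAdd n j) * M k j := by
        rw [Finset.sum_congr rfl fun j (_ : j ∈ Finset.univ) => by rw [hF_right, Finset.mul_sum]]
        rw [Finset.sum_comm]
        refine Finset.sum_congr rfl fun k _ => ?_
        rw [Finset.mul_sum]
        exact Finset.sum_congr rfl fun j _ => by ring
      rw [h1, h2, ← Finset.sum_add_distrib]
      have : ∀ k, x (Fin.castAdd n k) * c k + c k * ∑ j, x (Fin.natAdd n j) * M k j
          = c k * (x (Fin.castAdd n k) + ∑ j, x (Fin.natAdd n j) * M k j) := fun k => by ring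
      rw [Finset.sum_congr rfl fun k _ => this k]
      have hz : ∀ k : Fin n,
          c k * (x (Fin.castAdd n k) + ∑ j, x (Fin.natAdd n j) * M k j) = 0 :=
        fun k => by rw [h k, mul_zero]
      rw [Finset.sum_congr rfl fun k _ => hz k, Finset.sum_const_zero]
  -- the reversal as an Equiv
  set rE : Equiv.Perm (Fin n) := ⟨r, r, hrr, hrr⟩ with hrE
  have hMsym : ∀ i k, M i (r k) = M k (r i) := fun i k => key_sym' hM i k
  -- values of φ ∘ F
  have hφF_left : ∀ c i, φ (F c) (Fin.castAdd n i) = -(∑ k, c k * M k (r i)) := by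
    intro c i
    show ε (Fin.castAdd n i) * F c (e (Fin.castAdd n i)) = _
    rw [hε_left, he_left, hF_right, neg_one_mul]
  have hφF_right : ∀ c j, φ (F c) (Fin.natAdd n j) = c (r j) := by
    intro c j
    show ε (Fin.natAdd n j) * F c (e (Fin.natAdd n j)) = _
    rw [hε_right, he_right, hF_left, one_mul]
  -- the key set equality
  have hset : (dualCode C : Set (Fin (n + n) → S)) = φ '' (C : Set (Fin (n + n) → S)) := by
    ext x
    simp only [Set.mem_image, SetLike.mem_coe]
    constructor
    · intro hx
      rw [memD] at hx
      refine ⟨F (fun k => x (Fin.natAdd n (r k))), (memC _).2 ⟨_, rfl⟩, ?_⟩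
      funext idx
      induction idx using Fin.addCases with
      | left i =>
          rw [hφF_left]
          have hxi : x (Fin.castAdd n i) = -∑ j, x (Fin.natAdd n j) * M i j := by
            have := hx i; linear_combination this
          rw [hxi]
          congr 1
          refine Fintype.sum_equiv rE _ _ fun k => ?_
          rw [show rE k = r k from rfl, hMsym i k]
      | right j =>
          rw [hφF_right, hrr]
    · rintro ⟨y, hy, rfl⟩
      obtain ⟨c, rfl⟩ := (memC y).1 hy
      rw [memD]
      intro i
      rw [hφF_left]
      have : ∑ k, c k * M k (r i) = ∑ j, φ (F c) (Fin.natAdd n j) * M i j := by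
        refine Fintype.sum_equiv rE _ _ fun k => ?_
        rw [show rE k = r k from rfl, hφF_right, hrr, hMsym i k]
      rw [← this]
      ring
  have hsigns : ∀ i, ε i = 1 ∨ ε i = -1 := by
    intro i
    induction i using Fin.addCases with
    | left i => exact Or.inr (hε_left i)
    | right j => exact Or.inl (hε_right j)
  refine ⟨⟨σ, ε, hsigns, hset⟩, ?_⟩
  have hφφ : ∀ x, φ (φ x) = -x := by
    intro x
    funext i
    show ε i * (ε (e i) * x (e (e i))) = -x i
    rw [hee]
    induction i using Fin.addCases with
    | left i => rw [hε_left, he_left, hε_right]; ring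
    | right j => rw [hε_right, he_right, hε_left]; ring
  have hinj : Function.Injective φ := by
    intro a b hab
    have h2 := congrArg φ hab
    rw [hφφ, hφφ] at h2
    exact neg_injective h2
  have hnorm : ∀ x, hammingNorm (φ x) = hammingNorm x := by
    intro x
    have hiff : ∀ i, φ x i ≠ 0 ↔ x (σ i) ≠ 0 := by
      intro i
      show ε i * x (σ i) ≠ 0 ↔ _
      rcases hsigns i with h | h <;> rw [h] <;> simp
    unfold hammingNorm
    refine Finset.card_equiv σ ?_
    intro i
    simp only [Finset.mem_filter, Finset.mem_univ, true_and]
    exact hiff i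
  intro w
  have hseteq : {x : Fin (n + n) → S | x ∈ dualCode C ∧ hammingNorm x = w}
      = φ '' {x : Fin (n + n) → S | x ∈ C ∧ hammingNorm x = w} := by
    ext x
    simp only [Set.mem_setOf_eq, Set.mem_image]
    constructor
    · rintro ⟨hx, hw⟩
      have hx' : x ∈ φ '' (C : Set (Fin (n + n) → S)) := by rw [← hset]; exact hx
      obtain ⟨y, hy, rfl⟩ := hx'
      exact ⟨y, ⟨hy, by rw [← hnorm y]; exact hw⟩, rfl⟩
    · rintro ⟨y, ⟨hy, hw⟩, rfl⟩
      refine ⟨?_, by rw [hnorm y]; exact hw⟩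
      have hx' : φ y ∈ φ '' (C : Set (Fin (n + n) → S)) := ⟨y, hy, rfl⟩
      rw [← hset] at hx'
      exact hx'
  rw [hseteq, Set.ncard_image_of_injective _ hinj]
end
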